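/- Let A* be a projective line arrangement in ℙ²(ℂ). Suppose that every graph of Fan type in 𝓕(A*) is connected and that every line of A* contains a point of multiplicity at least three. If there is a graph F ∈ 𝓕(A*) having an edge that is not contained in any simple circuit of F, then A* has a decone with a general position partition. -/

import Mathlib

open scoped Classical

/-- The complex projective plane `ℙ²(ℂ)`, the projectivization of `ℂ³`. -/
abbrev P2 : Type := Projectivization ℂ (Fin 3 → ℂ)

/-- A projective line in `ℙ²(ℂ)`: the image of a 2-dimensional linear subspace of `ℂ³`. -/
def IsProjLine (L : Set P2) : Prop :=
  ∃ W : Submodule ℂ (Fin 3 → ℂ), Module.finrank ℂ W = 2 ∧ L = {p : P2 | p.rep ∈ W}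

/-- The multiplicity of a point in an arrangement: the number of lines passing through it. -/
noncomputable def mult (A : Finset (Set P2)) (p : P2) : ℕ :=
  (A.filter (fun L => p ∈ L)).card

/-- `M₃(A)`: the set of points lying on at least three lines of `A`. -/
def M3 (A : Finset (Set P2)) : Set P2 := {p | 3 ≤ mult A p}

/-- `A` has a decone with a general position partition. -/
def HasDeconeGPP (A : Finset (Set P2)) : Prop :=
  ∃ L ∈ A, ∃ C₁ C₂ : Finset (Set P2),
    C₁.Nonempty ∧ C₂.Nonempty ∧ Disjoint C₁ C₂ ∧ C₁ ∪ C₂ = A.erase L ∧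
    ∀ H₁ ∈ C₁, ∀ H₂ ∈ C₂, ∀ p ∈ H₁ ∩ H₂, ∀ K ∈ A, p ∈ K → K = H₁ ∨ K = H₂

/-- `F` is a graph of Fan type for the arrangement `A`: its vertices are the points of
`M₃(A)`, every edge joins two points on a common line of `A`, and for each line `L` the
edges joining points of `M₃(A) ∩ L` are exactly the consecutive pairs of some enumeration
of `M₃(A) ∩ L`. -/
def IsFanGraph (A : Finset (Set P2)) (F : SimpleGraph ↥(M3 A)) : Prop :=
  (∀ v w : ↥(M3 A), F.Adj v w → ∃ L ∈ A, (v : P2) ∈ L ∧ (w : P2) ∈ L) ∧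
  ∀ L ∈ A, (∃ v : ↥(M3 A), (v : P2) ∈ L) →
    ∃ (m : ℕ) (e : Fin m → ↥(M3 A)), Function.Injective e ∧
      (∀ v : ↥(M3 A), (v : P2) ∈ L ↔ ∃ i, e i = v) ∧
      (∀ v w : ↥(M3 A), (v : P2) ∈ L → (w : P2) ∈ L →
        (F.Adj v w ↔ ∃ i j : Fin m, (j : ℕ) = (i : ℕ) + 1 ∧
          ((e i = v ∧ e j = w) ∨ (e i = w ∧ e j = v))))


lemma line_unique {L H : Set P2} (hL : IsProjLine L) (hH : IsProjLine H)
    {v w : P2} (hvw : v ≠ w) (hvL : v ∈ L) (hwL : w ∈ L) (hvH : v ∈ H) (hwH : w ∈ H) :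
    H = L := by
  obtain ⟨W, hW2, rfl⟩ := hL
  obtain ⟨U, hU2, rfl⟩ := hH
  have hli : LinearIndependent ℂ ![v.rep, w.rep] := by
    rw [linearIndependent_fin2]
    refine ⟨w.rep_nonzero, fun a ha => ?_⟩
    apply hvw
    have ha0 : a ≠ 0 := by
      rintro rfl; exact v.rep_nonzero (by simpa using ha.symm)
    have := (Projectivization.mk_eq_mk_iff ℂ v.rep w.rep v.rep_nonzero w.rep_nonzero).2
      ⟨Units.mk0 a ha0, ha⟩
    simpa [Projectivization.mk_rep] using this
  have hrange : Set.range ![v.rep, w.rep] = {v.rep, w.rep} := by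
    simp [Set.range_subset_iff, Set.pair_comm]
  have hfr : Module.finrank ℂ (Submodule.span ℂ ({v.rep, w.rep} : Set (Fin 3 → ℂ))) = 2 := by
    have := finrank_span_eq_card hli
    rw [hrange] at this
    simpa using this
  have hspanW : Submodule.span ℂ ({v.rep, w.rep} : Set (Fin 3 → ℂ)) = W := by
    apply Submodule.eq_of_le_of_finrank_le
    · rw [Submodule.span_le]
      rintro x (rfl | rfl)
      · exact hvL
      · exact hwL
    · rw [hW2, hfr]
  have hspanU : Submodule.span ℂ ({v.rep, w.rep} : Set (Fin 3 → ℂ)) = U := by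
    apply Submodule.eq_of_le_of_finrank_le
    · rw [Submodule.span_le]
      rintro x (rfl | rfl)
      · exact hvH
      · exact hwH
    · rw [hU2, hfr]
  rw [← hspanW, ← hspanU]

theorem bridge_edge_gives_gpp
    (A : Finset (Set P2)) (hA : ∀ L ∈ A, IsProjLine L)
    (hconn : ∀ F : SimpleGraph ↥(M3 A), IsFanGraph A F → F.Connected)
    (hmult : ∀ L ∈ A, ∃ p ∈ M3 A, p ∈ L)
    (F : SimpleGraph ↥(M3 A)) (hF : IsFanGraph A F)
    (v w : ↥(M3 A)) (hadj : F.Adj v w)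
    (hnocirc : ¬ ∃ (u : ↥(M3 A)) (cW : F.Walk u u), cW.IsCycle ∧ s(v, w) ∈ cW.edges) :
    HasDeconeGPP A := by
  classical
  obtain ⟨L, hLA, hvL, hwL⟩ := hF.1 v w hadj
  have hvw : v ≠ w := hadj.ne
  have hvwP : (v : P2) ≠ (w : P2) := fun h => hvw (Subtype.ext h)
  -- the bridge property
  set G := F \ SimpleGraph.fromEdgeSet {s(v, w)} with hGdef
  have hbr : ¬ G.Reachable v w := by
    have hb : F.IsBridge s(v, w) := by
      rw [SimpleGraph.isBridge_iff_adj_and_forall_cycle_notMem (by exact hadj)]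
      exact fun u p hp hmem => hnocirc ⟨u, p, hp, hmem⟩
    rw [SimpleGraph.isBridge_iff] at hb
    exact hb
  -- uniqueness of the line through v and w
  have huniq : ∀ H ∈ A, (v : P2) ∈ H → (w : P2) ∈ H → H = L := by
    intro H hH hvH hwH
    exact line_unique (hA L hLA) (hA H hH) hvwP hvL hwL hvH hwH
  -- all M3 points on a line H ≠ L are mutually reachable in G
  have hreach : ∀ H ∈ A, H ≠ L → ∀ p q : ↥(M3 A), (p : P2) ∈ H → (q : P2) ∈ H →
      G.Reachable p q := by
    intro H hH hHL p q hp hq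
    obtain ⟨m, e, _hinj, hmem, hedge⟩ := hF.2 H hH ⟨p, hp⟩
    have hGad : ∀ (i j : Fin m), (j : ℕ) = (i : ℕ) + 1 → G.Adj (e i) (e j) := by
      intro i j hij
      have heiH : ((e i : ↥(M3 A)) : P2) ∈ H := (hmem (e i)).2 ⟨i, rfl⟩
      have hejH : ((e j : ↥(M3 A)) : P2) ∈ H := (hmem (e j)).2 ⟨j, rfl⟩
      have hFadj : F.Adj (e i) (e j) :=
        (hedge (e i) (e j) heiH hejH).2 ⟨i, j, hij, Or.inl ⟨rfl, rfl⟩⟩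
      rw [hGdef, SimpleGraph.sdiff_adj]
      refine ⟨hFadj, ?_⟩
      rw [SimpleGraph.fromEdgeSet_adj]
      rintro ⟨hs, -⟩
      rw [Set.mem_singleton_iff, Sym2.eq_iff] at hs
      apply hHL
      rcases hs with ⟨h1, h2⟩ | ⟨h1, h2⟩
      · exact huniq H hH (h1 ▸ heiH) (h2 ▸ hejH)
      · exact huniq H hH (h2 ▸ hejH) (h1 ▸ heiH)
    obtain ⟨ip, hip⟩ := (hmem p).1 hp
    obtain ⟨iq, hiq⟩ := (hmem q).1 hq
    have hm0 : 0 < m := ip.pos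
    have claim : ∀ n (hn : n < m), G.Reachable (e ⟨0, hm0⟩) (e ⟨n, hn⟩) := by
      intro n
      induction n with
      | zero => intro hn; rfl
      | succ k ih =>
        intro hn
        have hk : k < m := Nat.lt_of_succ_lt hn
        exact (ih hk).trans (hGad ⟨k, hk⟩ ⟨k + 1, hn⟩ rfl).reachable
    have h1 : G.Reachable (e ⟨0, hm0⟩) p := by
      have := claim (ip : ℕ) ip.2
      simpa [hip] using this
    have h2 : G.Reachable (e ⟨0, hm0⟩) q := by
      have := claim (iq : ℕ) iq.2
      simpa [hiq] using this
    exact h1.symm.trans h2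
  -- the partition
  set P : Set P2 → Prop := fun H => ∀ p : ↥(M3 A), (p : P2) ∈ H → G.Reachable v p with hPdef
  refine ⟨L, hLA, (A.erase L).filter P, (A.erase L).filter (fun H => ¬ P H),
    ?_, ?_, ?_, ?_, ?_⟩
  · -- C₁ nonempty: a line through v other than L
    have hv3 : 3 ≤ (A.filter (fun K => (v : P2) ∈ K)).card := v.2
    have hL1 : L ∈ A.filter (fun K => (v : P2) ∈ K) := Finset.mem_filter.2 ⟨hLA, hvL⟩
    have : 0 < ((A.filter (fun K => (v : P2) ∈ K)).erase L).card := by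
      rw [Finset.card_erase_of_mem hL1]; omega
    obtain ⟨H, hHe⟩ := Finset.card_pos.1 this
    have hHL : H ≠ L := Finset.ne_of_mem_erase hHe
    have hHf := Finset.mem_of_mem_erase hHe
    have hHA : H ∈ A := (Finset.mem_filter.1 hHf).1
    have hvH : (v : P2) ∈ H := (Finset.mem_filter.1 hHf).2
    refine ⟨H, Finset.mem_filter.2 ⟨Finset.mem_erase.2 ⟨hHL, hHA⟩, ?_⟩⟩
    intro p hp
    exact hreach H hHA hHL v p hvH hp
  · -- C₂ nonempty: a line through w other than L
    have hw3 : 3 ≤ (A.filter (fun K => (w : P2) ∈ K)).card := w.2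
    have hL1 : L ∈ A.filter (fun K => (w : P2) ∈ K) := Finset.mem_filter.2 ⟨hLA, hwL⟩
    have : 0 < ((A.filter (fun K => (w : P2) ∈ K)).erase L).card := by
      rw [Finset.card_erase_of_mem hL1]; omega
    obtain ⟨H, hHe⟩ := Finset.card_pos.1 this
    have hHL : H ≠ L := Finset.ne_of_mem_erase hHe
    have hHf := Finset.mem_of_mem_erase hHe
    have hHA : H ∈ A := (Finset.mem_filter.1 hHf).1
    have hwH : (w : P2) ∈ H := (Finset.mem_filter.1 hHf).2
    refine ⟨H, Finset.mem_filter.2 ⟨Finset.mem_erase.2 ⟨hHL, hHA⟩, ?_⟩⟩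
    intro hPH
    exact hbr (hPH w hwH)
  · exact Finset.disjoint_filter_filter_not _ _ _
  · exact Finset.filter_union_filter_not_eq _ _
  · intro H₁ h1 H₂ h2 p hp K hK hpK
    rw [Finset.mem_filter] at h1 h2
    have hH1A : H₁ ∈ A := Finset.mem_of_mem_erase h1.1
    have hH2A : H₂ ∈ A := Finset.mem_of_mem_erase h2.1
    have hH1L : H₁ ≠ L := Finset.ne_of_mem_erase h1.1
    have hH2L : H₂ ≠ L := Finset.ne_of_mem_erase h2.1
    have hH12 : H₁ ≠ H₂ := fun h => h2.2 (h ▸ h1.2)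
    by_contra hc
    push_neg at hc
    obtain ⟨hKH1, hKH2⟩ := hc
    have hpH1 : p ∈ H₁ := hp.1
    have hpH2 : p ∈ H₂ := hp.2
    -- p has multiplicity ≥ 3
    have hpM : p ∈ M3 A := by
      have hsub : ({H₁, H₂, K} : Finset (Set P2)) ⊆ A.filter (fun J => p ∈ J) := by
        intro J hJ
        simp only [Finset.mem_insert, Finset.mem_singleton] at hJ
        rcases hJ with rfl | rfl | rfl
        · exact Finset.mem_filter.2 ⟨hH1A, hpH1⟩
        · exact Finset.mem_filter.2 ⟨hH2A, hpH2⟩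
        · exact Finset.mem_filter.2 ⟨hK, hpK⟩
      have hcard : ({H₁, H₂, K} : Finset (Set P2)).card = 3 := by
        rw [Finset.card_insert_of_notMem, Finset.card_insert_of_notMem,
          Finset.card_singleton]
        · simp [Ne.symm hKH2]
        · simp [hH12, Ne.symm hKH1]
      have := Finset.card_le_card hsub
      rw [hcard] at this
      exact this
    set pv : ↥(M3 A) := ⟨p, hpM⟩ with hpv
    have hr1 : G.Reachable v pv := h1.2 pv hpH1
    have hr2 : ∀ q : ↥(M3 A), (q : P2) ∈ H₂ → G.Reachable v q := by
      intro q hq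
      exact hr1.trans (hreach H₂ hH2A hH2L pv q hpH2 hq)
    exact h2.2 hr2
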